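/- Let H be an n×n strict lower k-Hessenberg matrix with block decomposition H = [[B, A],[D, C]] where A is the m×m lower triangular block (m = n − k). If G := C A⁻¹ B − D is invertible, then H is invertible and H⁻¹ = [[0,0],[A⁻¹,0]] − [I_k; E] G⁻¹ [F, I_k], where E = −A⁻¹ B and F = −C A⁻¹. -/

import Mathlib

open Matrix


/-- Theorem 3.1 (sufficiency): inverse of a strict lower `k`-Hessenberg matrix
`H = [[B, A], [D, C]]` with `A` the `m × m` lower triangular block. -/
theorem stmt14 {m k : ℕ}
    (A : Matrix (Fin m) (Fin m) ℂ) (B : Matrix (Fin m) (Fin k) ℂ)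
    (C : Matrix (Fin k) (Fin m) ℂ) (D : Matrix (Fin k) (Fin k) ℂ)
    (hAlow : ∀ i j : Fin m, i < j → A i j = 0)
    (hAdiag : ∀ i : Fin m, A i i ≠ 0)
    (hG : IsUnit (C * A⁻¹ * B - D)) :
    Matrix.fromBlocks B A D C *
        (Matrix.fromBlocks (0 : Matrix (Fin k) (Fin m) ℂ) 0 A⁻¹ 0 -
          Matrix.fromRows (1 : Matrix (Fin k) (Fin k) ℂ) (-(A⁻¹ * B)) *
            (C * A⁻¹ * B - D)⁻¹ *
              Matrix.fromCols (-(C * A⁻¹)) (1 : Matrix (Fin k) (Fin k) ℂ)) = 1 ∧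
      (Matrix.fromBlocks (0 : Matrix (Fin k) (Fin m) ℂ) 0 A⁻¹ 0 -
          Matrix.fromRows (1 : Matrix (Fin k) (Fin k) ℂ) (-(A⁻¹ * B)) *
            (C * A⁻¹ * B - D)⁻¹ *
              Matrix.fromCols (-(C * A⁻¹)) (1 : Matrix (Fin k) (Fin k) ℂ)) *
        Matrix.fromBlocks B A D C = 1 := by
  set G := C * A⁻¹ * B - D with hGdef
  have hAdet : A.det ≠ 0 := by
    rw [Matrix.det_of_lowerTriangular A (fun i j h => hAlow i j h)]
    exact Finset.prod_ne_zero_iff.2 fun i _ => hAdiag i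
  have hA : IsUnit A.det := isUnit_iff_ne_zero.2 hAdet
  have hAi : A⁻¹ * A = 1 := nonsing_inv_mul A hA
  have hAi' : A * A⁻¹ = 1 := mul_nonsing_inv A hA
  have hGdetu : IsUnit G.det := (Matrix.isUnit_iff_isUnit_det G).1 hG
  have hGi : G⁻¹ * G = 1 := nonsing_inv_mul G hGdetu
  have hGi' : G * G⁻¹ = 1 := mul_nonsing_inv G hGdetu
  have key : Matrix.fromRows (1 : Matrix (Fin k) (Fin k) ℂ) (-(A⁻¹ * B)) * G⁻¹ *
      Matrix.fromCols (-(C * A⁻¹)) (1 : Matrix (Fin k) (Fin k) ℂ) =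
      Matrix.fromBlocks (G⁻¹ * -(C * A⁻¹)) G⁻¹
        (-(A⁻¹ * B) * G⁻¹ * -(C * A⁻¹)) (-(A⁻¹ * B) * G⁻¹) := by
    rw [Matrix.fromRows_mul, Matrix.one_mul, Matrix.fromRows_mul_fromCols]
    simp only [Matrix.mul_one]
  rw [key]
  have hmain : (Matrix.fromBlocks (0 : Matrix (Fin k) (Fin m) ℂ) 0 A⁻¹ 0 -
      Matrix.fromBlocks (G⁻¹ * -(C * A⁻¹)) G⁻¹
        (-(A⁻¹ * B) * G⁻¹ * -(C * A⁻¹)) (-(A⁻¹ * B) * G⁻¹)) *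
      Matrix.fromBlocks B A D C = 1 := by
    rw [sub_eq_add_neg, Matrix.fromBlocks_neg, Matrix.fromBlocks_add, Matrix.fromBlocks_multiply,
      ← Matrix.fromBlocks_one]
    rw [Matrix.fromBlocks_inj]
    refine ⟨?_, ?_, ?_, ?_⟩ <;>
      simp only [zero_add, Matrix.neg_mul, Matrix.mul_neg, neg_neg, Matrix.add_mul]
    · rw [Matrix.mul_assoc G⁻¹ (C * A⁻¹) B, ← sub_eq_add_neg,
        ← Matrix.mul_sub, ← hGdef, hGi]
    · rw [Matrix.mul_assoc G⁻¹ (C * A⁻¹) A, Matrix.mul_assoc C A⁻¹ A, hAi, Matrix.mul_one]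
      simp
    · rw [Matrix.mul_assoc (A⁻¹ * B * G⁻¹) (C * A⁻¹) B, add_assoc,
        neg_add_eq_sub, ← Matrix.mul_sub, ← neg_sub (C * A⁻¹ * B) D, ← hGdef, Matrix.mul_neg,
        Matrix.mul_assoc (A⁻¹ * B) G⁻¹ G, hGi, Matrix.mul_one]
      simp
    · rw [Matrix.mul_assoc (A⁻¹ * B * G⁻¹) (C * A⁻¹) A, Matrix.mul_assoc C A⁻¹ A, hAi,
        Matrix.mul_one]
      simp [hAi]
  refine ⟨?_, hmain⟩
  exact (Matrix.mul_eq_one_comm_of_equiv (Equiv.sumComm (Fin m) (Fin k))).mpr hmain
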